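/- For any 0 ≤ η ≤ 1, E ≥ 0, and x ≥ 0, the thermal output entropy satisfies g(η·g⁻¹(x) + (1−η)·E) ≥ ln(η·e^x + (1−η)·e^{g(E)}); i.e., the Gaussian output entropy of the attenuator is at least the quantum Entropy Power Inequality lower bound. -/

import Mathlib

open Real Set Filter

noncomputable def g (E : ℝ) : ℝ := (E + 1) * Real.log (E + 1) - E * Real.log E

noncomputable def ginv : ℝ → ℝ := Function.invFunOn g (Set.Ici 0)

lemma g_continuous : Continuous g := by
  have h1 : Continuous fun E : ℝ => (E + 1) * Real.log (E + 1) :=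
    Real.continuous_mul_log.comp (continuous_id.add continuous_const)
  exact h1.sub Real.continuous_mul_log

lemma hasDerivAt_g {y : ℝ} (hy : 0 < y) :
    HasDerivAt g (Real.log (y + 1) - Real.log y) y := by
  have h1 : HasDerivAt (fun E : ℝ => (E + 1) * Real.log (E + 1))
      ((Real.log (y + 1) + 1) * 1) y := by
    exact (Real.hasDerivAt_mul_log (by positivity)).comp y ((hasDerivAt_id y).add_const 1)
  have h2 : HasDerivAt (fun E : ℝ => E * Real.log E) (Real.log y + 1) y :=
    Real.hasDerivAt_mul_log hy.ne'
  have := h1.sub h2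
  change HasDerivAt (fun E : ℝ => (E + 1) * Real.log (E + 1) - E * Real.log E) _ y at this
  show HasDerivAt (fun E : ℝ => (E + 1) * Real.log (E + 1) - E * Real.log E) _ y
  convert this using 1
  ring

/-- 2 log s < s - 1/s for s > 1 -/
lemma two_log_lt {s : ℝ} (hs : 1 < s) : 2 * Real.log s < s - 1/s := by
  set f : ℝ → ℝ := fun t => t - 1/t - 2 * Real.log t with hf
  have hderiv : ∀ t ∈ interior (Set.Ici (1:ℝ)), 0 < deriv f t := by
    intro t ht
    rw [interior_Ici] at ht
    have ht0 : (0:ℝ) < t := lt_trans one_pos ht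
    have hd : HasDerivAt f (1 - (-(t^2)⁻¹) - 2 * t⁻¹) t := by
      have h1 : HasDerivAt (fun u : ℝ => 1/u) (-(t^2)⁻¹) t := by
        simpa [one_div] using hasDerivAt_inv ht0.ne'
      have h2 : HasDerivAt (fun u : ℝ => 2 * Real.log u) (2 * t⁻¹) t :=
        (Real.hasDerivAt_log ht0.ne').const_mul 2
      exact ((hasDerivAt_id t).sub h1).sub h2
    rw [hd.deriv]
    have : 1 - (-(t^2)⁻¹) - 2 * t⁻¹ = (1 - t⁻¹)^2 := by
      field_simp
      ring
    rw [this]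
    have h1t : t⁻¹ < 1 := by
      rw [inv_lt_one_iff₀]; right; exact ht
    have : 0 < 1 - t⁻¹ := by linarith
    positivity
  have hcont : ContinuousOn f (Set.Ici 1) := by
    intro t ht
    have ht0 : (0:ℝ) < t := lt_of_lt_of_le one_pos ht
    exact ((continuousAt_id.sub (continuousAt_const.div continuousAt_id ht0.ne')).sub
      (continuousAt_const.mul (Real.continuousAt_log ht0.ne'))).continuousWithinAt
  have hmono := strictMonoOn_of_deriv_pos (convex_Ici 1) hcont hderiv
  have := hmono (Set.self_mem_Ici) (Set.mem_Ici.mpr hs.le) hs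
  simp only [hf] at this
  have h1 : (1:ℝ) - 1/1 - 2 * Real.log 1 = 0 := by norm_num
  rw [h1] at this
  linarith

lemma log_ratio_lt {y : ℝ} (hy : 0 < y) :
    Real.log (y + 1) - Real.log y < 1 / Real.sqrt (y * (y + 1)) := by
  set s : ℝ := Real.sqrt (y * (y + 1)) / y with hs
  have hsq : Real.sqrt (y * (y + 1)) ^ 2 = y * (y + 1) :=
    Real.sq_sqrt (by positivity)
  have hsqrtpos : 0 < Real.sqrt (y * (y + 1)) := Real.sqrt_pos.mpr (by positivity)
  have hspos : 0 < s := by positivity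
  have hs2 : s ^ 2 = (y + 1) / y := by
    rw [hs, div_pow, hsq]
    field_simp
  have hs1 : 1 < s := by
    have : (1:ℝ) < s ^ 2 := by
      rw [hs2]
      rw [lt_div_iff₀ hy]; linarith
    nlinarith
  have hkey := two_log_lt hs1
  have hlog : Real.log (y + 1) - Real.log y = 2 * Real.log s := by
    rw [← Real.log_div (by positivity) hy.ne', ← hs2, Real.log_pow]
    push_cast; ring
  have hrhs : s - 1/s = 1 / Real.sqrt (y * (y + 1)) := by
    have h0 : s - 1/s = (s^2 - 1) / s := by field_simp
    rw [h0, hs2, hs]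
    field_simp
    ring
  rw [hlog, ← hrhs]; exact hkey

lemma exp_g_strictConcave : StrictConcaveOn ℝ (Set.Ici 0) (fun E => Real.exp (g E)) := by
  apply strictConcaveOn_of_deriv2_neg (convex_Ici 0)
    (Continuous.rexp g_continuous).continuousOn
  intro y hy
  rw [interior_Ici] at hy
  have hy0 : (0:ℝ) < y := hy
  -- first derivative on Ioi 0
  have hd1 : ∀ z ∈ Set.Ioi (0:ℝ), HasDerivAt (fun E => Real.exp (g E))
      (Real.exp (g z) * (Real.log (z + 1) - Real.log z)) z := fun z hz =>
    (hasDerivAt_g hz).exp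
  have hev : deriv (fun E => Real.exp (g E)) =ᶠ[nhds y]
      (fun z => Real.exp (g z) * (Real.log (z + 1) - Real.log z)) := by
    filter_upwards [isOpen_Ioi.mem_nhds hy] with z hz
    exact (hd1 z hz).deriv
  have hd2 : HasDerivAt (fun z => Real.exp (g z) * (Real.log (z + 1) - Real.log z))
      (Real.exp (g y) * (Real.log (y + 1) - Real.log y) * (Real.log (y + 1) - Real.log y)
        + Real.exp (g y) * ((y + 1)⁻¹ * 1 - y⁻¹)) y := by
    have ha : HasDerivAt (fun z : ℝ => Real.exp (g z))
        (Real.exp (g y) * (Real.log (y + 1) - Real.log y)) y := (hasDerivAt_g hy0).exp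
    have hb : HasDerivAt (fun z : ℝ => Real.log (z + 1) - Real.log z)
        ((y + 1)⁻¹ * 1 - y⁻¹) y := by
      have hb1 : HasDerivAt (fun z : ℝ => Real.log (z + 1)) ((y + 1)⁻¹ * 1) y :=
        (Real.hasDerivAt_log (by positivity)).comp y ((hasDerivAt_id y).add_const 1)
      exact hb1.sub (Real.hasDerivAt_log hy0.ne')
    exact ha.mul hb
  have hderiv2 : deriv^[2] (fun E => Real.exp (g E)) y =
      Real.exp (g y) * ((Real.log (y + 1) - Real.log y)^2 + ((y + 1)⁻¹ - y⁻¹)) := by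
    simp only [Function.iterate_succ, Function.iterate_zero, Function.comp_apply, id_eq]
    rw [hev.deriv_eq, hd2.deriv]
    ring
  rw [hderiv2]
  -- key inequality
  have hkey : (Real.log (y + 1) - Real.log y)^2 < 1 / (y * (y + 1)) := by
    have h1 := log_ratio_lt hy0
    have h2 : 0 ≤ Real.log (y + 1) - Real.log y := by
      have := Real.log_le_log hy0 (by linarith : y ≤ y + 1)
      linarith
    have h3 : (1 / Real.sqrt (y * (y + 1)))^2 = 1 / (y * (y + 1)) := by
      rw [div_pow, one_pow, Real.sq_sqrt (by positivity)]
    calc (Real.log (y + 1) - Real.log y)^2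
        < (1 / Real.sqrt (y * (y + 1)))^2 := by
          apply sq_lt_sq' (by nlinarith [Real.sqrt_pos.mpr (show (0:ℝ) < y * (y+1) by positivity), h1]) h1
      _ = 1 / (y * (y + 1)) := h3
  have hinv : (y + 1)⁻¹ - y⁻¹ = -(1 / (y * (y + 1))) := by
    field_simp
    ring
  have hexp : 0 < Real.exp (g y) := Real.exp_pos _
  nlinarith [hkey, hexp]

lemma ginv_spec {x : ℝ} (hx : 0 ≤ x) : ginv x ∈ Set.Ici (0:ℝ) ∧ g (ginv x) = x := by
  have hex : ∃ a ∈ Set.Ici (0:ℝ), g a = x := by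
    set M : ℝ := Real.exp x with hM
    have hM0 : 0 < M := Real.exp_pos x
    have hxleq : x ≤ g M := by
      have h1 : Real.log M ≤ Real.log (M + 1) := Real.log_le_log hM0 (by linarith)
      have h2 : Real.log M = x := Real.log_exp x
      have : g M = (M + 1) * Real.log (M + 1) - M * Real.log M := rfl
      nlinarith [h1, h2]
    have hg0 : g 0 = 0 := by simp [g]
    have hsub := intermediate_value_Icc (le_of_lt hM0) (g_continuous.continuousOn (s := Set.Icc 0 M))
    have hxmem : x ∈ Set.Icc (g 0) (g M) := by
      rw [hg0]; exact ⟨hx, hxleq⟩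
    obtain ⟨a, ha, hga⟩ := hsub hxmem
    exact ⟨a, ha.1, hga⟩
  exact ⟨Function.invFunOn_mem hex, Function.invFunOn_eq hex⟩

theorem thermal_output_ge_EPI (η E x : ℝ) (hη0 : 0 ≤ η) (hη1 : η ≤ 1) (hE : 0 ≤ E)
    (hx : 0 ≤ x) :
    g (η * ginv x + (1 - η) * E) ≥
      Real.log (η * Real.exp x + (1 - η) * Real.exp (g E)) := by
  obtain ⟨hNmem, hgN⟩ := ginv_spec hx
  set N : ℝ := ginv x with hN
  have h1η : (0:ℝ) ≤ 1 - η := by linarith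
  have hconc := exp_g_strictConcave.concaveOn.2 hNmem (Set.mem_Ici.mpr hE) hη0 h1η (by ring)
  simp only [smul_eq_mul] at hconc
  rw [hgN] at hconc
  have hpos : 0 < η * Real.exp x + (1 - η) * Real.exp (g E) := by
    rcases lt_or_ge η 1 with h | h
    · have := mul_pos (by linarith : (0:ℝ) < 1 - η) (Real.exp_pos (g E))
      have := mul_nonneg hη0 (Real.exp_pos x).le
      linarith
    · have hη1' : η = 1 := le_antisymm hη1 h
      rw [hη1']
      simpa using Real.exp_pos x
  rw [ge_iff_le, Real.log_le_iff_le_exp hpos]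
  exact hconc
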